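/- For every n ≥ 3, if f, g, h ∈ ℂ[x] satisfy f^n + g^n = h^n and at most one of f, g, h is constant, and f, g, h are pairwise coprime, then no such f, g, h exist (the Fermat equation for polynomials has only trivial solutions). -/

import Mathlib

open Polynomial UniqueFactorizationMonoid UniqueFactorizationDomain

/-- The Fermat equation `f^n + g^n = h^n` for polynomials over ℂ with `n ≥ 3`
has no solutions with `f, g, h` pairwise coprime and at most one of them
constant. -/
theorem polynomial_fermat (n : ℕ) (hn : 3 ≤ n) (f g h : ℂ[X])
    (hfg : IsCoprime f g) (hfh : IsCoprime f h) (hgh : IsCoprime g h)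
    (hconst1 : ¬ (f.natDegree = 0 ∧ g.natDegree = 0))
    (hconst2 : ¬ (f.natDegree = 0 ∧ h.natDegree = 0))
    (hconst3 : ¬ (g.natDegree = 0 ∧ h.natDegree = 0))
    (heq : f ^ n + g ^ n = h ^ n) : False := by
  classical
  have hn0 : 0 < n := by omega
  -- nonzero
  have hf : f ≠ 0 := by
    rintro rfl
    exact hconst1 ⟨natDegree_zero, natDegree_eq_zero_of_isUnit (isCoprime_zero_left.mp hfg)⟩
  have hg : g ≠ 0 := by
    rintro rfl
    exact hconst1 ⟨natDegree_eq_zero_of_isUnit (isCoprime_zero_left.mp hfg.symm), natDegree_zero⟩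
  have hh : h ≠ 0 := by
    rintro rfl
    exact hconst2 ⟨natDegree_eq_zero_of_isUnit (isCoprime_zero_left.mp hfh.symm), natDegree_zero⟩
  have ha : f ^ n ≠ 0 := pow_ne_zero _ hf
  have hb : g ^ n ≠ 0 := pow_ne_zero _ hg
  have hc : (-(h ^ n)) ≠ 0 := neg_ne_zero.mpr (pow_ne_zero _ hh)
  have hab : IsCoprime (f ^ n) (g ^ n) := hfg.pow
  have hbc : IsCoprime (g ^ n) (-(h ^ n)) := (hgh.pow).neg_right
  have hca : IsCoprime (-(h ^ n)) (f ^ n) := ((hfh.pow).neg_right).symm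
  have hsum : f ^ n + g ^ n + (-(h ^ n)) = 0 := by rw [heq]; ring
  rcases Polynomial.abc ha hb hc hab hsum with ⟨h1, h2, h3⟩ | ⟨d1, d2, d3⟩
  · -- degree contradiction
    have hrad : radical (f ^ n * g ^ n * -(h ^ n)) = radical (f * g * h) := by
      rw [show f ^ n * g ^ n * -(h ^ n) = -(f ^ n * g ^ n * h ^ n) by ring,
        radical_neg, ← mul_pow, ← mul_pow,
        radical_pow (f * g * h) hn0.ne']
    rw [hrad] at h1 h2 h3
    have hfgh : f * g * h ≠ 0 := mul_ne_zero (mul_ne_zero hf hg) hh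
    have hle : (radical (f * g * h)).natDegree ≤ (f * g * h).natDegree :=
      natDegree_le_of_dvd radical_dvd_self hfgh
    have hD : (f * g * h).natDegree = f.natDegree + g.natDegree + h.natDegree := by
      rw [natDegree_mul (mul_ne_zero hf hg) hh, natDegree_mul hf hg]
    rw [natDegree_pow] at h1 h2
    rw [natDegree_neg, natDegree_pow] at h3
    have := Nat.add_le_add (Nat.add_le_add h1 h2) h3
    rw [hD] at hle
    nlinarith [f.natDegree, g.natDegree, h.natDegree]
  · -- derivative contradiction
    have hf' : f.natDegree = 0 := by
      have : derivative f = 0 := by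
        have := d1
        rw [derivative_pow, mul_eq_zero, mul_eq_zero] at this
        rcases this with (hc | hc) | hc
        · rw [C_eq_zero, Nat.cast_eq_zero] at hc; omega
        · exact absurd hc (pow_ne_zero _ hf)
        · exact hc
      exact natDegree_eq_zero_of_derivative_eq_zero this
    have hg' : g.natDegree = 0 := by
      have : derivative g = 0 := by
        have := d2
        rw [derivative_pow, mul_eq_zero, mul_eq_zero] at this
        rcases this with (hc | hc) | hc
        · rw [C_eq_zero, Nat.cast_eq_zero] at hc; omega
        · exact absurd hc (pow_ne_zero _ hg)
        · exact hc
      exact natDegree_eq_zero_of_derivative_eq_zero this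
    exact hconst1 ⟨hf', hg'⟩
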